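/- Let n ≥ 5 and let G be the graph on nodes {v₁,…,v_n} with edge set {{v₁,v_i}, {v₂,v_i} : 3 ≤ i ≤ n}. Then every nest-set of G either contains v₁ or contains v₂; moreover if a nest-set contains v₁ but not v₂ (or v₂ but not v₁), it must contain all of v₃,…,v_n. Consequently nsw(G) = n − 1. -/

import Mathlib

open Finset

/-- `N` is a nest-set of the hypergraph with edge set `E`: the family
`{e \ N : e ∈ E, e ∩ N ≠ ∅}` is totally ordered by inclusion. -/
def IsNestSet {V : Type*} [DecidableEq V] (E : Finset (Finset V)) (N : Finset V) : Prop :=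
  ∀ e₁ ∈ E, ∀ e₂ ∈ E, (e₁ ∩ N).Nonempty → (e₂ ∩ N).Nonempty →
    e₁ \ N ⊆ e₂ \ N ∨ e₂ \ N ⊆ e₁ \ N

/-- `v` is a nest point: the edges containing `v` are totally ordered by inclusion. -/
def IsNestPoint {V : Type*} (E : Finset (Finset V)) (v : V) : Prop :=
  ∀ e₁ ∈ E, ∀ e₂ ∈ E, v ∈ e₁ → v ∈ e₂ → e₁ ⊆ e₂ ∨ e₂ ⊆ e₁

/-- The edge set of the hypergraph `G - N`. -/
def hreduce {V : Type*} [DecidableEq V] (E : Finset (Finset V)) (N : Finset V) :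
    Finset (Finset V) :=
  (E.image (fun e => e \ N)).filter (fun e => 2 ≤ e.card)

/-- `gap(G, N) = max { |N| - |e ∩ N| : e ∈ E, e ∩ N ≠ ∅ }`. -/
def hgap {V : Type*} [DecidableEq V] (E : Finset (Finset V)) (N : Finset V) : ℕ :=
  (E.filter (fun e => (e ∩ N).Nonempty)).sup (fun e => N.card - (e ∩ N).card)

/-- `L = N₁, …, N_t` is a nest-set elimination order of the hypergraph with node set `Vs`
and edge set `E`. -/
def IsElimOrder {V : Type*} [DecidableEq V] (Vs : Finset V) (E : Finset (Finset V))
    (L : List (Finset V)) : Prop :=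
  L.Pairwise Disjoint ∧ (∀ N ∈ L, N.Nonempty) ∧ L.foldr (· ∪ ·) ∅ = Vs ∧
  ∀ i : Fin L.length, IsNestSet ((L.take i).foldl hreduce E) (L.get i)

/-- The nest-set width of an elimination order: maximum cardinality of an element. -/
def nswOf {V : Type*} (L : List (Finset V)) : ℕ := (L.map Finset.card).foldr max 0

/-- The nest-set gap of an elimination order: max over `i` of
`gap(G - N₁ - ⋯ - N_{i-1}, N_i)`. -/
def nsgOf {V : Type*} [DecidableEq V] (E : Finset (Finset V)) (L : List (Finset V)) : ℕ :=
  ((List.range L.length).map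
    (fun i => hgap ((L.take i).foldl hreduce E) (L.getD i ∅))).foldr max 0

section Stmt3Aux

variable {n : ℕ}

def Eg (n : ℕ) : Finset (Finset (Fin (n + 5))) :=
  (Finset.univ.filter (fun i : Fin (n + 5) => 2 ≤ (i : ℕ))).image
    (fun i => ({0, i} : Finset (Fin (n + 5)))) ∪
  (Finset.univ.filter (fun i : Fin (n + 5) => 2 ≤ (i : ℕ))).image
    (fun i => ({1, i} : Finset (Fin (n + 5))))

variable {n : ℕ}

lemma fin01 : (0 : Fin (n+5)) ≠ 1 := by
  intro h
  have := congrArg Fin.val h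
  simp [Fin.val_zero, Fin.val_one] at this

lemma fin_two_le {y : Fin (n+5)} (h0 : y ≠ 0) (h1 : y ≠ 1) : 2 ≤ (y:ℕ) := by
  by_contra h
  push_neg at h
  have : (y:ℕ) = 0 ∨ (y:ℕ) = 1 := by omega
  rcases this with h | h
  · exact h0 (Fin.ext (by simp [h, Fin.val_zero]))
  · exact h1 (Fin.ext (by simp [h, Fin.val_one]))

lemma val_lt_two {a : Fin (n+5)} (ha : a = 0 ∨ a = 1) : (a:ℕ) < 2 := by
  rcases ha with rfl | rfl <;> simp [Fin.val_zero, Fin.val_one]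

lemma edge_mem {a i : Fin (n+5)} (ha : a = 0 ∨ a = 1) (hi : 2 ≤ (i:ℕ)) :
    ({a, i} : Finset (Fin (n+5))) ∈ Eg n := by
  simp only [Eg, mem_union, mem_image, mem_filter, mem_univ, true_and]
  rcases ha with rfl | rfl
  · exact Or.inl ⟨i, hi, rfl⟩
  · exact Or.inr ⟨i, hi, rfl⟩

lemma nest01 {N : Finset (Fin (n+5))} (hN : IsNestSet (Eg n) N) (hne : N.Nonempty) :
    (0 : Fin (n+5)) ∈ N ∨ (1 : Fin (n+5)) ∈ N := by
  by_contra h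
  push_neg at h
  obtain ⟨h0, h1⟩ := h
  obtain ⟨v, hv⟩ := hne
  have hv0 : v ≠ 0 := fun h => h0 (h ▸ hv)
  have hv1 : v ≠ 1 := fun h => h1 (h ▸ hv)
  have hv2 : 2 ≤ (v:ℕ) := fin_two_le hv0 hv1
  have h := hN {0, v} (edge_mem (Or.inl rfl) hv2) {1, v} (edge_mem (Or.inr rfl) hv2)
    ⟨v, by simp [hv]⟩ ⟨v, by simp [hv]⟩
  rcases h with h | h
  · have : (0 : Fin (n+5)) ∈ ({1, v} : Finset (Fin (n+5))) \ N := h (by simp [h0])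
    simp [Finset.mem_sdiff, fin01, hv0.symm] at this
  · have : (1 : Fin (n+5)) ∈ ({0, v} : Finset (Fin (n+5))) \ N := h (by simp [h1])
    simp [Finset.mem_sdiff, fin01.symm, hv1.symm] at this

lemma nest_pair {N : Finset (Fin (n+5))} (hN : IsNestSet (Eg n) N)
    {a i j : Fin (n+5)} (ha : a = 0 ∨ a = 1) (haN : a ∈ N)
    (hi : 2 ≤ (i:ℕ)) (hj : 2 ≤ (j:ℕ)) (hij : i ≠ j) : i ∈ N ∨ j ∈ N := by
  by_contra h
  push_neg at h
  obtain ⟨hiN, hjN⟩ := h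
  have hia : i ≠ a := fun h => by subst h; exact absurd (val_lt_two ha) (by omega)
  have hja : j ≠ a := fun h => by subst h; exact absurd (val_lt_two ha) (by omega)
  have h := hN {a, i} (edge_mem ha hi) {a, j} (edge_mem ha hj)
    ⟨a, by simp [haN]⟩ ⟨a, by simp [haN]⟩
  rcases h with h | h
  · have : i ∈ ({a, j} : Finset (Fin (n+5))) \ N := h (by simp [hiN])
    simp [Finset.mem_sdiff, hia, hij] at this
  · have : j ∈ ({a, i} : Finset (Fin (n+5))) \ N := h (by simp [hjN])
    simp [Finset.mem_sdiff, hja, hij.symm] at this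

lemma nest_all {N : Finset (Fin (n+5))} (hN : IsNestSet (Eg n) N) {a b : Fin (n+5)}
    (ha : a = 0 ∨ a = 1) (hb : b = 0 ∨ b = 1) (hab : a ≠ b)
    (haN : a ∈ N) (hbN : b ∉ N) : ∀ i : Fin (n+5), 2 ≤ (i:ℕ) → i ∈ N := by
  intro i hi
  by_contra hiN
  have hib : i ≠ b := by
    intro h
    have hb2 := val_lt_two hb
    rw [h] at hi
    omega
  set j : Fin (n+5) := ⟨if (i:ℕ) = 2 then 3 else 2, by split <;> omega⟩ with hjdef
  have hj2 : 2 ≤ (j:ℕ) := by rw [hjdef]; dsimp only; split <;> omega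
  have hji : j ≠ i := by
    intro h
    have := congrArg Fin.val h
    rw [hjdef] at this
    dsimp only at this
    split at this <;> omega
  have hjN : j ∈ N := (nest_pair hN ha haN hi hj2 hji.symm).resolve_left hiN
  have h := hN {a, i} (edge_mem ha hi) {b, j} (edge_mem hb hj2)
    ⟨a, by simp [haN]⟩ ⟨j, by simp [hjN]⟩
  rcases h with h | h
  · have : i ∈ ({b, j} : Finset (Fin (n+5))) \ N := h (by simp [hiN])
    simp [Finset.mem_sdiff, hib, hji.symm] at this
  · have : b ∈ ({a, i} : Finset (Fin (n+5))) \ N := h (by simp [hbN])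
    simp [Finset.mem_sdiff, hab.symm, hib.symm] at this

lemma subset_single_comp {α : Type*} [DecidableEq α] {s t : Finset α} {x : α}
    (hs : s ⊆ {x}) (ht : t ⊆ {x}) : s ⊆ t ∨ t ⊆ s := by
  rcases Finset.subset_singleton_iff.1 hs with rfl | rfl
  · exact Or.inl (empty_subset _)
  · rcases Finset.subset_singleton_iff.1 ht with rfl | rfl
    · exact Or.inr (empty_subset _)
    · exact Or.inl (subset_refl _)

lemma edge_sdiff_subset {e : Finset (Fin (n+5))} (he : e ∈ Eg n) :
    e \ (Finset.univ \ {1}) ⊆ {1} := by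
  intro x hx
  simp only [Finset.mem_sdiff, Finset.mem_univ, true_and, not_not, Finset.mem_singleton] at hx ⊢
  tauto

lemma hreduce_empty : hreduce (Eg n) (Finset.univ \ {1}) = ∅ := by
  rw [Finset.eq_empty_iff_forall_notMem]
  intro e he
  simp only [hreduce, mem_filter, mem_image] at he
  obtain ⟨⟨e', he', rfl⟩, hc⟩ := he
  have := Finset.card_le_card (edge_sdiff_subset he')
  simp at this
  omega

lemma card_lb {N : Finset (Fin (n+5))} (hN : IsNestSet (Eg n) N) (hne : N.Nonempty) :
    n + 4 ≤ N.card := by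
  have hx : ∃ x : Fin (n+5), ∀ y : Fin (n+5), y ≠ x → y ∈ N := by
    by_cases h0 : (0:Fin (n+5)) ∈ N <;> by_cases h1 : (1:Fin (n+5)) ∈ N
    · by_cases hall : ∀ i : Fin (n+5), 2 ≤ (i:ℕ) → i ∈ N
      · refine ⟨0, fun y hy => ?_⟩
        rcases eq_or_ne y 1 with rfl | hy1
        · exact h1
        · exact hall y (fin_two_le hy hy1)
      · push_neg at hall
        obtain ⟨i₀, hi₀, hi₀N⟩ := hall
        refine ⟨i₀, fun y hy => ?_⟩
        rcases eq_or_ne y 0 with rfl | hy0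
        · exact h0
        rcases eq_or_ne y 1 with rfl | hy1
        · exact h1
        exact (nest_pair hN (Or.inl rfl) h0 hi₀ (fin_two_le hy0 hy1) hy.symm).resolve_left hi₀N
    · refine ⟨1, fun y hy => ?_⟩
      rcases eq_or_ne y 0 with rfl | hy0
      · exact h0
      exact nest_all hN (Or.inl rfl) (Or.inr rfl) fin01 h0 h1 y (fin_two_le hy0 hy)
    · refine ⟨0, fun y hy => ?_⟩
      rcases eq_or_ne y 1 with rfl | hy1
      · exact h1
      exact nest_all hN (Or.inr rfl) (Or.inl rfl) fin01.symm h1 h0 y (fin_two_le hy hy1)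
    · rcases nest01 hN hne with h | h
      · exact absurd h h0
      · exact absurd h h1
  obtain ⟨x, hx⟩ := hx
  have hsub : Finset.univ \ {x} ⊆ N := fun y hy =>
    hx y (by simpa using (Finset.mem_sdiff.1 hy).2)
  have hc := Finset.card_le_card hsub
  rw [Finset.card_sdiff_of_subset (Finset.singleton_subset_iff.2 (Finset.mem_univ _))] at hc
  simp [Finset.card_univ] at hc
  omega

lemma elim_lb {L : List (Finset (Fin (n+5)))}
    (h : IsElimOrder Finset.univ (Eg n) L) : ∃ N ∈ L, n + 4 ≤ N.card := by
  obtain ⟨-, hne, hcov, hnest⟩ := h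
  rcases L with - | ⟨N, L'⟩
  · rw [List.foldr_nil] at hcov
    exact absurd hcov.symm Finset.univ_nonempty.ne_empty
  · refine ⟨N, List.mem_cons_self, ?_⟩
    have hN : IsNestSet (Eg n) N := hnest ⟨0, Nat.succ_pos _⟩
    exact card_lb hN (hne N (List.mem_cons_self))

lemma elim_ub : ∃ L : List (Finset (Fin (n+5))),
    IsElimOrder Finset.univ (Eg n) L ∧ ∀ N ∈ L, N.card ≤ n + 4 := by
  refine ⟨[Finset.univ \ {1}, {1}], ⟨?_, ?_, ?_, ?_⟩, ?_⟩
  · refine List.pairwise_cons.2 ⟨?_, List.pairwise_singleton _ _⟩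
    intro t ht
    simp only [List.mem_singleton] at ht
    subst ht
    exact Finset.sdiff_disjoint
  · intro N hN
    simp only [List.mem_cons, List.mem_singleton] at hN
    rcases hN with rfl | rfl | h
    · exact ⟨0, by simp [fin01]⟩
    · exact ⟨1, by simp⟩
    · exact absurd h List.not_mem_nil
  · show (Finset.univ \ {1}) ∪ ({1} ∪ ∅) = Finset.univ
    rw [Finset.union_empty, Finset.sdiff_union_of_subset (Finset.singleton_subset_iff.2 (Finset.mem_univ _))]
  · intro i
    match i with
    | ⟨0, _⟩ =>
      show IsNestSet (Eg n) (Finset.univ \ {1})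
      intro e₁ he₁ e₂ he₂ _ _
      exact subset_single_comp (edge_sdiff_subset he₁) (edge_sdiff_subset he₂)
    | ⟨1, _⟩ =>
      show IsNestSet (hreduce (Eg n) (Finset.univ \ {1})) {1}
      rw [hreduce_empty]
      intro e₁ he₁
      exact absurd he₁ (Finset.notMem_empty _)
  · intro N hN
    simp only [List.mem_cons, List.mem_singleton] at hN
    rcases hN with rfl | rfl | h
    · rw [Finset.card_sdiff_of_subset (Finset.singleton_subset_iff.2 (Finset.mem_univ _))]
      simp [Finset.card_univ]
    · simp
    · exact absurd h List.not_mem_nil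

end Stmt3Aux

/-- For `n ≥ 5` (here `m = n + 5`), the graph on nodes `Fin m` with edges `{v₁, v_i}` and
`{v₂, v_i}` for `3 ≤ i ≤ m` (indices `0`, `1`, and `i` with `i.val ≥ 2`): every nonempty
nest-set contains node `0` or node `1`; if it contains exactly one of them, it contains all
nodes `i` with `i.val ≥ 2`; and `nsw(G) = m - 1`. -/
theorem stmt_3 (n : ℕ) :
    let E : Finset (Finset (Fin (n + 5))) :=
      (Finset.univ.filter (fun i : Fin (n + 5) => 2 ≤ (i : ℕ))).image
        (fun i => ({0, i} : Finset (Fin (n + 5)))) ∪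
      (Finset.univ.filter (fun i : Fin (n + 5) => 2 ≤ (i : ℕ))).image
        (fun i => ({1, i} : Finset (Fin (n + 5))))
    (∀ N : Finset (Fin (n + 5)), IsNestSet E N → N.Nonempty → (0 : Fin (n + 5)) ∈ N ∨ (1 : Fin (n + 5)) ∈ N) ∧
    (∀ N : Finset (Fin (n + 5)), IsNestSet E N →
      (((0 : Fin (n + 5)) ∈ N ∧ (1 : Fin (n + 5)) ∉ N) ∨ ((1 : Fin (n + 5)) ∈ N ∧ (0 : Fin (n + 5)) ∉ N)) →
      ∀ i : Fin (n + 5), 2 ≤ (i : ℕ) → i ∈ N) ∧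
    (∀ L : List (Finset (Fin (n + 5))), IsElimOrder Finset.univ E L →
      ∃ N ∈ L, n + 4 ≤ N.card) ∧
    (∃ L : List (Finset (Fin (n + 5))), IsElimOrder Finset.univ E L ∧
      ∀ N ∈ L, N.card ≤ n + 4) := by
  intro E
  have hE : E = Eg n := rfl
  refine ⟨?_, ?_, ?_, ?_⟩
  · intro N hN hne
    exact nest01 (hE ▸ hN) hne
  · intro N hN h i hi
    rcases h with ⟨h0, h1⟩ | ⟨h1, h0⟩
    · exact nest_all (hE ▸ hN) (Or.inl rfl) (Or.inr rfl) fin01 h0 h1 i hi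
    · exact nest_all (hE ▸ hN) (Or.inr rfl) (Or.inl rfl) fin01.symm h1 h0 i hi
  · intro L hL
    exact elim_lb (hE ▸ hL)
  · obtain ⟨L, h1, h2⟩ := elim_ub (n := n)
    exact ⟨L, hE ▸ h1, h2⟩
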